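/- Let F be a field of characteristic different from 2, V a finite-dimensional F-vector space, f a nondegenerate symmetric bilinear form on V, and g ∈ O(V, f). Then det(g) = (−1)^{rank(Id_V − g)}; that is, the determinant of an orthogonal transformation equals (−1) raised to the Dickson invariant D(g) = rank(Id − g) mod 2, so in characteristic different from 2 the determinant is equivalent to the Dickson invariant. -/

import Mathlib

open Module LinearMap Polynomial

section Aux

universe v

lemma det_one_sub_of_sq_zero {F : Type*} [Field F] {V : Type*} [AddCommGroup V]
    [Module F V] [FiniteDimensional F V] (h : Module.End F V) (hh : h * h = 0) :
    LinearMap.det (1 - h) = 1 := by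
  classical
  have hnil : IsNilpotent h := ⟨2, by rw [pow_two]; exact hh⟩
  have hcp : h.charpoly = Polynomial.X ^ (Module.finrank F V) :=
    hnil.charpoly_eq_X_pow_finrank
  let b := Module.finBasis F V
  set M := LinearMap.toMatrix b b h with hM
  have hMcp : M.charpoly = Polynomial.X ^ (Module.finrank F V) := by
    rw [LinearMap.charpoly_toMatrix, hcp]
  have h1 : LinearMap.det (1 - h) = Matrix.det (1 - M) := by
    rw [← LinearMap.det_toMatrix b (1 - h), map_sub]
    rw [show (1 : Module.End F V) = LinearMap.id from rfl, LinearMap.toMatrix_id]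
  have h2 := _root_.eval_det (Matrix.charmatrix M) (1 : F)
  rw [Matrix.matPolyEquiv_charmatrix] at h2
  have h3 : Polynomial.eval 1 (Matrix.charmatrix M).det = 1 := by
    rw [← Matrix.charpoly, hMcp]
    simp
  have h4 : Polynomial.eval ((Matrix.scalar (Fin (finrank F V))) 1) (X - C M) = 1 - M := by
    simp
  rw [h3, h4] at h2
  rw [h1, ← h2]

lemma det_eq_neg_one_of_basis {F V : Type*} [Field F] [AddCommGroup V] [Module F V]
    [FiniteDimensional F V]
    {ι : Type*} [Fintype ι] [DecidableEq ι] (b : Basis ι F V) (s : V →ₗ[F] V) (i₀ : ι)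
    (h0 : s (b i₀) = -(b i₀)) (h1 : ∀ i, i ≠ i₀ → s (b i) = b i) :
    LinearMap.det s = -1 := by
  rw [← LinearMap.det_toMatrix b]
  have hd : LinearMap.toMatrix b b s
      = Matrix.diagonal (fun i => if i = i₀ then (-1:F) else 1) := by
    ext i j
    rw [LinearMap.toMatrix_apply, Matrix.diagonal_apply]
    by_cases hj : j = i₀
    · subst hj
      rw [h0, map_neg, b.repr_self]
      simp only [Finsupp.coe_neg, Pi.neg_apply, Finsupp.single_apply]
      by_cases hij : i = j <;> simp [hij, eq_comm]
    · rw [h1 j hj, b.repr_self]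
      simp only [Finsupp.single_apply]
      by_cases hij : i = j
      · subst hij; simp [hj]
      · simp [hij, Ne.symm hij]
  rw [hd, Matrix.det_diagonal]
  rw [Finset.prod_ite_eq' Finset.univ i₀ (fun _ => (-1 : F))]
  simp

variable {F V : Type*} [Field F] [AddCommGroup V] [Module F V] [FiniteDimensional F V]

noncomputable def reflMap (f : LinearMap.BilinForm F V) (u : V) : V →ₗ[F] V :=
  LinearMap.id - ((2 * (f u u)⁻¹) • (f u : V →ₗ[F] F)).smulRight u

omit [FiniteDimensional F V] in
lemma reflMap_apply (f : LinearMap.BilinForm F V) (u x : V) :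
    reflMap f u x = x - ((2 * (f u u)⁻¹) * f u x) • u := by
  simp [reflMap, smul_smul]

omit [FiniteDimensional F V] in
lemma reflMap_apply_self (f : LinearMap.BilinForm F V) (u : V) (hu : f u u ≠ 0) :
    reflMap f u u = -u := by
  rw [reflMap_apply]
  rw [mul_assoc, inv_mul_cancel₀ hu, mul_one, two_smul]
  abel

omit [FiniteDimensional F V] in
lemma reflMap_apply_ker (f : LinearMap.BilinForm F V) (u x : V) (hx : f u x = 0) :
    reflMap f u x = x := by
  rw [reflMap_apply, hx, mul_zero, zero_smul, sub_zero]

omit [FiniteDimensional F V] in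
lemma reflMap_neg_form (f : LinearMap.BilinForm F V) (u : V) (hu : f u u ≠ 0) (x : V) :
    f u (reflMap f u x) = - f u x := by
  rw [reflMap_apply]
  simp only [map_sub, map_smul, smul_eq_mul]
  field_simp
  ring

omit [FiniteDimensional F V] in
lemma reflMap_invol (f : LinearMap.BilinForm F V) (u : V) (hu : f u u ≠ 0) (x : V) :
    reflMap f u (reflMap f u x) = x := by
  conv_lhs => rw [reflMap_apply]
  rw [reflMap_neg_form f u hu x, reflMap_apply]
  match_scalars <;> field_simp <;> ring

omit [FiniteDimensional F V] in
lemma reflMap_isometry (f : LinearMap.BilinForm F V) (hsymm : ∀ u v, f u v = f v u)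
    (u : V) (hu : f u u ≠ 0) (x y : V) :
    f (reflMap f u x) (reflMap f u y) = f x y := by
  simp only [reflMap_apply, map_sub, map_smul, LinearMap.sub_apply, LinearMap.smul_apply,
    smul_eq_mul]
  rw [hsymm x u]
  field_simp
  ring

lemma reflMap_det (f : LinearMap.BilinForm F V) (u : V) (hu : f u u ≠ 0) :
    LinearMap.det (reflMap f u) = -1 := by
  classical
  set K := LinearMap.ker (f u) with hK
  have hli : ∀ (c : F) (x : V), x ∈ K → c • u + x = 0 → c = 0 := by
    intro c x hx hcx
    have := congrArg (f u) hcx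
    simp only [map_add, map_smul, smul_eq_mul, map_zero] at this
    rw [LinearMap.mem_ker.mp hx, add_zero] at this
    rcases mul_eq_zero.mp this with h | h
    · exact h
    · exact absurd h hu
  have hsp : ∀ z : V, ∃ c : F, z + c • u ∈ K := by
    intro z
    refine ⟨-(f u z) / (f u u), ?_⟩
    simp only [hK, LinearMap.mem_ker, map_add, map_smul, smul_eq_mul]
    field_simp
    ring
  let bK := Module.finBasis F K
  let bb := Basis.mkFinCons u bK hli hsp
  have hbb : (bb : Fin (finrank F K + 1) → V) = Fin.cons u (Subtype.val ∘ bK) :=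
    Basis.coe_mkFinCons u bK hli hsp
  refine det_eq_neg_one_of_basis bb (reflMap f u) 0 ?_ ?_
  · have h0 : bb 0 = u := by rw [hbb]; rfl
    rw [h0]
    exact reflMap_apply_self f u hu
  · intro i hi
    obtain ⟨j, rfl⟩ := Fin.eq_succ_of_ne_zero hi
    have h0 : bb j.succ = (bK j : V) := by rw [hbb]; rfl
    rw [h0]
    exact reflMap_apply_ker f u _ (LinearMap.mem_ker.mp (bK j).2)

lemma even_finrank_of_alt_nondeg {F : Type*} [Field F] (n : ℕ) :
    ∀ (W : Type v) [AddCommGroup W] [Module F W] [FiniteDimensional F W]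
      (B : LinearMap.BilinForm F W), B.IsAlt → B.Nondegenerate →
      Module.finrank F W = n → Even n := by
  induction n using Nat.strong_induction_on with
  | _ n IH =>
    intro W _ _ _ B halt hnd hrk
    rcases Nat.eq_zero_or_pos n with h0 | hpos
    · simp [h0]
    · have hpos' : 0 < finrank F W := hrk ▸ hpos
      have : Nontrivial W := Module.nontrivial_of_finrank_pos hpos'
      obtain ⟨w, hw⟩ := exists_ne (0 : W)
      have hy : ∃ y, B w y ≠ 0 := by
        by_contra hcon
        push_neg at hcon
        exact hw (hnd.1 w hcon)
      obtain ⟨y, hy⟩ := hy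
      have hskew : ∀ a b : W, B a b = - B b a := by
        intro a b
        have h0 := halt (a + b)
        simp only [map_add, LinearMap.add_apply, halt.self_eq_zero, zero_add, add_zero] at h0
        exact eq_neg_of_add_eq_zero_right h0
      have hyw : B y w ≠ 0 := by
        intro h
        exact hy (by rw [hskew w y, h, neg_zero])
      set P : Submodule F W := Submodule.span F {w, y} with hP
      have hwP : w ∈ P := Submodule.subset_span (by simp)
      have hyP : y ∈ P := Submodule.subset_span (by simp)
      have hrefl : B.IsRefl := halt.isRefl
      have hres : (B.restrict P).Nondegenerate := by
        refine (LinearMap.IsRefl.nondegenerate_iff_separatingLeft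
          (BilinForm.IsAlt.isRefl (B₁ := B.restrict P) (fun x => halt x))).mpr ?_
        rintro ⟨p, hp⟩ hall
        obtain ⟨a, b, hab⟩ := Submodule.mem_span_pair.mp hp
        have h1 : B p w = 0 := by simpa using hall ⟨w, hwP⟩
        have h2 : B p y = 0 := by simpa using hall ⟨y, hyP⟩
        rw [← hab] at h1 h2
        simp only [map_add, map_smul, LinearMap.add_apply, LinearMap.smul_apply,
          smul_eq_mul, halt.self_eq_zero, mul_zero, add_zero, zero_add] at h1 h2
        have hb : b = 0 := by
          rcases mul_eq_zero.mp h1 with h | h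
          · exact h
          · exact absurd h hyw
        have ha : a = 0 := by
          rcases mul_eq_zero.mp h2 with h | h
          · exact h
          · exact absurd h hy
        ext
        simp [← hab, ha, hb]
      have hcompl : IsCompl P (B.orthogonal P) :=
        B.isCompl_orthogonal_of_restrict_nondegenerate hrefl hres
      set O := B.orthogonal P with hO
      have hdisj : Disjoint O (B.orthogonal O) := by
        rw [hO, B.orthogonal_orthogonal hnd hrefl]
        exact hcompl.disjoint.symm
      have hresO : (B.restrict O).Nondegenerate :=
        B.nondegenerate_restrict_of_disjoint_orthogonal hrefl hdisj
      have hli : LinearIndependent F ![w, y] := by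
        rw [LinearIndependent.pair_iff]
        intro s t hst
        have h1 : B (s • w + t • y) y = 0 := by rw [hst]; simp
        have h2 : B (s • w + t • y) w = 0 := by rw [hst]; simp
        simp only [map_add, map_smul, LinearMap.add_apply, LinearMap.smul_apply,
          smul_eq_mul, halt.self_eq_zero, mul_zero, add_zero, zero_add] at h1 h2
        constructor
        · rcases mul_eq_zero.mp h1 with h | h
          · exact h
          · exact absurd h hy
        · rcases mul_eq_zero.mp h2 with h | h
          · exact h
          · exact absurd h hyw
      have hset : (Set.range ![w, y]) = ({w, y} : Set W) := by
        ext z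
        simp [Matrix.range_cons, Matrix.range_empty, or_comm]
      have hP2 : finrank F P = 2 := by
        rw [hP, ← hset, finrank_span_eq_card hli]
        simp
      have hsum : finrank F P + finrank F O = n := by
        rw [← hrk]
        exact Submodule.finrank_add_eq_of_isCompl hcompl
      have hOrk : finrank F O = n - 2 := by omega
      have heven : Even (n - 2) :=
        IH (n - 2) (by omega) O (B.restrict O) (fun x => halt x) hresO hOrk
      obtain ⟨k, hk⟩ := heven
      exact ⟨k + 1, by omega⟩

end Aux

theorem det_eq_neg_one_pow_dickson
    (F : Type*) [Field F] (hchar : ringChar F ≠ 2)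
    (V : Type*) [AddCommGroup V] [Module F V] [FiniteDimensional F V]
    (f : LinearMap.BilinForm F V)
    (hsymm : ∀ u v, f u v = f v u)
    (hnd : ∀ v, (∀ u, f u v = 0) → v = 0)
    (g : V ≃ₗ[F] V) (hg : ∀ u v, f (g u) (g v) = f u v) :
    LinearMap.det (g : V →ₗ[F] V) =
      (-1) ^ Module.finrank F
        (LinearMap.range ((1 : Module.End F V) - (g : Module.End F V))) := by
  classical
  have h2F : (2 : F) ≠ 0 := Ring.two_ne_zero hchar
  suffices key : ∀ (n : ℕ) (g : V ≃ₗ[F] V), (∀ u v, f (g u) (g v) = f u v) →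
      Module.finrank F
        (LinearMap.range ((1 : Module.End F V) - (g : Module.End F V))) = n →
      LinearMap.det (g : V →ₗ[F] V) = (-1) ^ n by
    exact key _ g hg rfl
  clear hg g
  intro n
  induction n using Nat.strong_induction_on with
  | _ n IH =>
    intro g hg hrk
    set h : Module.End F V := (1 : Module.End F V) - (g : Module.End F V) with hh
    have happ : ∀ x, h x = x - g x := fun x => by
      simp [hh, LinearMap.sub_apply]
    have hid : ∀ x y, f (h x) y + f x (h y) = f (h x) (h y) := by
      intro x y
      simp only [happ, map_sub, LinearMap.sub_apply]
      rw [hg x y]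
      ring
    by_cases hex : ∃ v, f (h v) (h v) ≠ 0
    · -- reflection case
      obtain ⟨v, hv⟩ := hex
      set u : V := h v with hu
      have hc : f u u ≠ 0 := hv
      have hune : u ≠ 0 := by
        intro h0
        rw [h0] at hc
        simp at hc
      have hvne : v ≠ 0 := by
        intro h0
        apply hune
        rw [hu, h0, map_zero]
      set s : V →ₗ[F] V := reflMap f u with hs
      set sE : V ≃ₗ[F] V := LinearEquiv.ofLinear s s
        (by ext x; exact reflMap_invol f u hc x)
        (by ext x; exact reflMap_invol f u hc x) with hsE
      set g' : V ≃ₗ[F] V := g.trans sE with hg'def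
      have hg'app : ∀ x, g' x = s (g x) := fun x => rfl
      have hg'orth : ∀ x y, f (g' x) (g' y) = f x y := by
        intro x y
        rw [hg'app, hg'app, hs]
        rw [reflMap_isometry f hsymm u hc, hg]
      set h' : Module.End F V := (1 : Module.End F V) - (g' : Module.End F V) with hh'
      have h'app : ∀ x, h' x = x - g' x := fun x => by
        simp [hh', LinearMap.sub_apply]
      -- s (g v) = v
      have huvg : u = v - g v := by rw [hu, happ]
      have hfugv : 2 * f u (g v) = - f u u := by
        have e1 : f u (g v) = f v (g v) - f v v := by
          rw [huvg]
          simp only [map_sub, LinearMap.sub_apply]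
          linear_combination (-1 : F) * hg v v
        have e2 : f u u = f v v + f v v - f v (g v) - f v (g v) := by
          rw [huvg]
          simp only [map_sub, LinearMap.sub_apply]
          linear_combination hg v v - hsymm (g v) v
        rw [e1, e2]
        ring
      have hsgv : s (g v) = v := by
        rw [hs, reflMap_apply]
        have hco : (2 * (f u u)⁻¹ * f u (g v)) = -1 := by
          rw [mul_comm (2 : F) (f u u)⁻¹, mul_assoc, hfugv, mul_neg, inv_mul_cancel₀ hc]
        rw [hco, neg_one_smul, sub_neg_eq_add, huvg]
        abel
      have hg'v : g' v = v := by rw [hg'app, hsgv]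
      -- fixed spaces
      set W := LinearMap.ker h with hW
      set W' := LinearMap.ker h' with hW'
      have hWle : W ≤ W' := by
        intro x hx
        have hgx : g x = x := by
          have := LinearMap.mem_ker.mp hx
          rw [happ] at this
          linear_combination (norm := module) -this
        have hfux : f u x = 0 := by
          have hx2 : f (g v) x = f v x := by
            conv_lhs => rw [← hgx]
            exact hg v x
          rw [huvg]
          simp only [map_sub, LinearMap.sub_apply]
          rw [hx2, sub_self]
        have hsx : s x = x := reflMap_apply_ker f u x hfux
        have : g' x = x := by rw [hg'app, hgx, hsx]
        rw [hW', LinearMap.mem_ker, h'app, this, sub_self]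
      have hvW' : v ∈ W' := by
        rw [hW', LinearMap.mem_ker, h'app, hg'v, sub_self]
      have hvW : v ∉ W := by
        intro hmem
        apply hune
        rw [hu]
        exact LinearMap.mem_ker.mp hmem
      have hWlt : W < W' := lt_of_le_of_ne hWle (fun heq => hvW (heq ▸ hvW'))
      -- W' ≤ W ⊔ span v
      have hW'le : W' ≤ W ⊔ Submodule.span F {v} := by
        intro x hx
        have hgx' : g' x = x := by
          have := LinearMap.mem_ker.mp hx
          rw [h'app] at this
          linear_combination (norm := module) -this
        have hhx : h x ∈ Submodule.span F {u} := by
          have : s (g x) = x := by rw [← hg'app, hgx']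
          rw [hs, reflMap_apply] at this
          have hxe : x - g x = -((2 * (f u u)⁻¹ * f u (g x))) • u := by
            linear_combination (norm := module) -this
          rw [happ, hxe]
          exact Submodule.smul_mem _ _ (Submodule.mem_span_singleton_self u)
        obtain ⟨a, ha⟩ := Submodule.mem_span_singleton.mp hhx
        have hxav : x - a • v ∈ W := by
          rw [hW, LinearMap.mem_ker, map_sub, map_smul]
          rw [← hu, ← ha]
          simp
        refine Submodule.mem_sup.mpr ⟨x - a • v, hxav, a • v,
          Submodule.smul_mem _ _ (Submodule.mem_span_singleton_self v), by abel⟩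
      -- finrank computations
      have hspanv : finrank F (Submodule.span F {v}) = 1 := finrank_span_singleton hvne
      have hsupW : finrank F ↥(W ⊔ Submodule.span F {v}) ≤ finrank F W + 1 := by
        have := Submodule.finrank_sup_add_finrank_inf_eq W (Submodule.span F {v})
        have hle := Submodule.finrank_le (W ⊔ Submodule.span F {v} : Submodule F V)
        omega
      have hWW' : finrank F W < finrank F W' := Submodule.finrank_lt_finrank_of_lt hWlt
      have hW'le2 : finrank F W' ≤ finrank F W + 1 :=
        le_trans (Submodule.finrank_mono hW'le) hsupW
      have hW'eq : finrank F W' = finrank F W + 1 := by omega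
      have hrn : finrank F (LinearMap.range h) + finrank F W = finrank F V := by
        rw [hW]
        exact LinearMap.finrank_range_add_finrank_ker h
      have hrn' : finrank F (LinearMap.range h') + finrank F W' = finrank F V := by
        rw [hW']
        exact LinearMap.finrank_range_add_finrank_ker h'
      have hnpos : 1 ≤ n := by
        have hmem : u ∈ LinearMap.range h := ⟨v, hu.symm⟩
        rcases Nat.eq_zero_or_pos n with h0 | h1
        · exfalso
          have hbot : LinearMap.range h = ⊥ :=
            Submodule.finrank_eq_zero.mp (by omega)
          rw [hbot] at hmem
          exact hune (by simpa using hmem)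
        · exact h1
      have hrk' : finrank F (LinearMap.range h') = n - 1 := by omega
      have hdet' := IH (n - 1) (by omega) g' hg'orth hrk'
      have hcomp : (g' : V →ₗ[F] V) = s ∘ₗ (g : V →ₗ[F] V) := rfl
      rw [hcomp, LinearMap.det_comp, hs, reflMap_det f u hc] at hdet'
      have : LinearMap.det (g : V →ₗ[F] V) = -((-1 : F) ^ (n - 1)) := by
        linear_combination -hdet'
      obtain ⟨m, hm⟩ : ∃ m, n = m + 1 := ⟨n - 1, by omega⟩
      subst hm
      simp only [Nat.add_sub_cancel] at this
      rw [this, pow_succ]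
      ring
    · -- unipotent case
      push_neg at hex
      have halt0 : ∀ x y, f (h x) (h y) = 0 := by
        intro x y
        have h0 := hex (x + y)
        rw [map_add] at h0
        simp only [map_add, LinearMap.add_apply] at h0
        have hyx : f (h y) (h x) = f (h x) (h y) := hsymm _ _
        have h0' : f (h x) (h y) + f (h x) (h y) = 0 := by
          linear_combination h0 - hex x - hex y - hyx
        rw [← two_mul] at h0'
        rcases mul_eq_zero.mp h0' with hcon | hok
        · exact absurd hcon h2F
        · exact hok
      have hsq : h * h = 0 := by
        ext x
        show h (h x) = 0
        apply hnd
        intro w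
        have hk := hid w (h x)
        rw [halt0 w x, halt0 w (h x)] at hk
        linear_combination hk
      have hguni : (g : V →ₗ[F] V) = (1 : Module.End F V) - h := by
        rw [hh]
        abel
      have hdetg : LinearMap.det (g : V →ₗ[F] V) = 1 := by
        rw [hguni]
        exact det_one_sub_of_sq_zero h hsq
      -- evenness of n
      obtain ⟨U, hU⟩ := Submodule.exists_isCompl (LinearMap.ker h)
      have hUrank : finrank F U = n := by
        have r1 := LinearMap.finrank_range_add_finrank_ker h
        have r2 := Submodule.finrank_add_eq_of_isCompl hU
        omega
      set B : LinearMap.BilinForm F V := f ∘ₗ h with hB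
      have hBapp : ∀ x y, B x y = f (h x) y := fun x y => rfl
      have hBalt : (B.restrict U).IsAlt := by
        rintro ⟨x, hxU⟩
        show B x x = 0
        rw [hBapp]
        have hk := hid x x
        rw [halt0 x x, hsymm x (h x)] at hk
        have : 2 * f (h x) x = 0 := by linear_combination hk

        rcases mul_eq_zero.mp this with hcon | hok
        · exact absurd hcon h2F
        · exact hok
      have hBnd : (B.restrict U).Nondegenerate := by
        refine (LinearMap.IsRefl.nondegenerate_iff_separatingLeft hBalt.isRefl).mpr ?_
        rintro ⟨x, hxU⟩ hall
        have hker : ∀ y ∈ LinearMap.ker h, f (h x) y = 0 := by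
          intro y hy
          have hk := hid x y
          rw [LinearMap.mem_ker.mp hy] at hk
          simp only [map_zero] at hk
          linear_combination hk
        have hUall : ∀ y ∈ U, f (h x) y = 0 := by
          intro y hyU
          have := hall ⟨y, hyU⟩
          simpa [hBapp] using this
        have hallV : ∀ y, f (h x) y = 0 := by
          intro y
          have hy : y ∈ (LinearMap.ker h) ⊔ U := by
            rw [hU.sup_eq_top]
            trivial
          obtain ⟨a, ha, b, hb, rfl⟩ := Submodule.mem_sup.mp hy
          rw [map_add, hker a ha, hUall b hb, add_zero]
        have hhx : h x = 0 := hnd (h x) (fun w => by rw [hsymm w (h x)]; exact hallV w)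
        have hxker : x ∈ LinearMap.ker h := LinearMap.mem_ker.mpr hhx
        have : x ∈ (⊥ : Submodule F V) := hU.disjoint.le_bot ⟨hxker, hxU⟩
        exact Subtype.ext (by simpa using this)
      have heven : Even n :=
        even_finrank_of_alt_nondeg n U (B.restrict U) hBalt hBnd hUrank
      rw [hdetg, heven.neg_one_pow]
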